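/- Let s ∈ {0,1}, κ ∈ ℂ, λ ∈ ℂ. Let σ : ℝ → ℂ be twice differentiable and y : ℝ → ℂ be three times differentiable. Define y⁽⁰⁾ = y, y⁽¹⁾ = y' + (s+κ)σy, y⁽²⁾ = (y⁽¹⁾)' + (3κ²/2 + s²/2 + 2κs)σ²y − 2κσy⁽¹⁾, and let Y = (y⁽⁰⁾, y⁽¹⁾, y⁽²⁾)ᵀ. Then Y'(x) = (F(σ)(x) + Λ(λ))·Y(x) for all x ∈ ℝ if and only if y'''(x) + 2s·σ'(x)·y'(x) + (s+κ)·σ''(x)·y(x) = λ·y(x) for all x ∈ ℝ (i.e., the equation ℓ_{σ,s,κ}(y) = λy, where ℓ_{σ,s,κ}(y) = y''' + s(σ'y)' + sσ'y' + κσ''y). -/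
import Mathlib


/-- The matrix F(σ) associated with the differential expression
ℓ_{σ,s,κ}(y) = y''' + s(σ'y)' + sσ'y' + κσ''y. -/
noncomputable def Fmat (s κ : ℂ) (σ : ℝ → ℂ) (x : ℝ) : Matrix (Fin 3) (Fin 3) ℂ :=
  !![ -(s + κ) * σ x, 1, 0;
      -(3 * κ ^ 2 / 2 + s ^ 2 / 2 + 2 * κ * s) * σ x ^ 2, 2 * κ * σ x, 1;
      κ * (κ ^ 2 - s ^ 2) * σ x ^ 3,
        -(3 * κ ^ 2 / 2 + s ^ 2 / 2 - 2 * κ * s) * σ x ^ 2, (s - κ) * σ x ]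

/-- The matrix Λ(λ) with entry λ at position (3,1) and zeros elsewhere. -/
noncomputable def Lam (lam : ℂ) : Matrix (Fin 3) (Fin 3) ℂ :=
  !![0, 0, 0; 0, 0, 0; lam, 0, 0]

/-- The first quasi-derivative: y⁽¹⁾ = y' + (s+κ)σy. -/
noncomputable def qd1 (s κ : ℂ) (σ y : ℝ → ℂ) : ℝ → ℂ :=
  fun x => deriv y x + (s + κ) * σ x * y x

/-- The second quasi-derivative:
y⁽²⁾ = (y⁽¹⁾)' + (3κ²/2 + s²/2 + 2κs)σ²y − 2κσy⁽¹⁾. -/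
noncomputable def qd2 (s κ : ℂ) (σ y : ℝ → ℂ) : ℝ → ℂ :=
  fun x => deriv (qd1 s κ σ y) x
    + (3 * κ ^ 2 / 2 + s ^ 2 / 2 + 2 * κ * s) * σ x ^ 2 * y x
    - 2 * κ * σ x * qd1 s κ σ y x

/-- For s ∈ {0,1}, κ, λ ∈ ℂ, σ twice differentiable and y three times differentiable,
the vector Y = (y, y⁽¹⁾, y⁽²⁾)ᵀ of quasi-derivatives solves the first-order system
Y' = (F(σ) + Λ(λ))Y if and only if y solves the equation ℓ_{σ,s,κ}(y) = λy, i.e.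
y''' + 2sσ'y' + (s+κ)σ''y = λy. -/
theorem system_iff_thirdOrder_eq (s : ℂ) (hs : s = 0 ∨ s = 1) (κ lam : ℂ) (σ y : ℝ → ℂ)
    (hσ1 : Differentiable ℝ σ) (hσ2 : Differentiable ℝ (deriv σ))
    (hy1 : Differentiable ℝ y) (hy2 : Differentiable ℝ (deriv y))
    (hy3 : Differentiable ℝ (deriv (deriv y))) :
    (∀ (x : ℝ) (i : Fin 3),
        deriv (fun t => ![y t, qd1 s κ σ y t, qd2 s κ σ y t] i) x
          = ((Fmat s κ σ x + Lam lam).mulVec ![y x, qd1 s κ σ y x, qd2 s κ σ y x]) i)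
    ↔ (∀ x : ℝ,
        deriv (deriv (deriv y)) x + 2 * s * deriv σ x * deriv y x
          + (s + κ) * deriv (deriv σ) x * y x = lam * y x) := by
  have hq1 : qd1 s κ σ y = fun x => deriv y x + (s + κ) * (σ x * y x) := by
    funext x; simp only [qd1]; ring
  have hd1 : ∀ x, HasDerivAt (qd1 s κ σ y)
      (deriv (deriv y) x + (s + κ) * (deriv σ x * y x + σ x * deriv y x)) x := by
    intro x
    rw [hq1]
    exact (hy2 x).hasDerivAt.add
      (((hσ1 x).hasDerivAt.mul (hy1 x).hasDerivAt).const_mul _)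
  have hq2e : qd2 s κ σ y = fun x =>
      deriv (deriv y) x + (s + κ) * (deriv σ x * y x + σ x * deriv y x)
        + (3 * κ ^ 2 / 2 + s ^ 2 / 2 + 2 * κ * s) * (σ x * (σ x * y x))
        - 2 * κ * (σ x * (deriv y x + (s + κ) * (σ x * y x))) := by
    funext x
    simp only [qd2]
    rw [(hd1 x).deriv, hq1]
    ring
  have hd2 : ∀ x, deriv (qd2 s κ σ y) x =
      deriv (deriv (deriv y)) x
        + (s + κ) * ((deriv (deriv σ) x * y x + deriv σ x * deriv y x)
            + (deriv σ x * deriv y x + σ x * deriv (deriv y) x))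
        + (3 * κ ^ 2 / 2 + s ^ 2 / 2 + 2 * κ * s)
            * (deriv σ x * (σ x * y x) + σ x * (deriv σ x * y x + σ x * deriv y x))
        - 2 * κ * (deriv σ x * (deriv y x + (s + κ) * (σ x * y x))
            + σ x * (deriv (deriv y) x
              + (s + κ) * (deriv σ x * y x + σ x * deriv y x))) := by
    intro x
    rw [hq2e]
    exact ((((hy3 x).hasDerivAt.add
      ((((hσ2 x).hasDerivAt.mul (hy1 x).hasDerivAt).add
        ((hσ1 x).hasDerivAt.mul (hy2 x).hasDerivAt)).const_mul (s + κ))).add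
      (((hσ1 x).hasDerivAt.mul
        ((hσ1 x).hasDerivAt.mul (hy1 x).hasDerivAt)).const_mul _)).sub
      (((hσ1 x).hasDerivAt.mul
        ((hy2 x).hasDerivAt.add
          (((hσ1 x).hasDerivAt.mul (hy1 x).hasDerivAt).const_mul (s + κ)))).const_mul
        (2 * κ))).deriv
  have e1 : ∀ x, qd1 s κ σ y x = deriv y x + (s + κ) * (σ x * y x) := fun x => by rw [hq1]
  have e2 : ∀ x, qd2 s κ σ y x =
      deriv (deriv y) x + (s + κ) * (deriv σ x * y x + σ x * deriv y x)
        + (3 * κ ^ 2 / 2 + s ^ 2 / 2 + 2 * κ * s) * (σ x * (σ x * y x))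
        - 2 * κ * (σ x * (deriv y x + (s + κ) * (σ x * y x))) := fun x => by rw [hq2e]
  constructor
  · intro h x
    have h2 := h x 2
    simp [Fmat, Lam, Matrix.mulVec, dotProduct, Fin.sum_univ_three] at h2
    rw [hd2 x, e1 x, e2 x] at h2
    rcases hs with hs | hs <;> subst hs <;> linear_combination h2
  · intro h x i
    have hx := h x
    fin_cases i
    · simp [Fmat, Lam, Matrix.mulVec, dotProduct, Fin.sum_univ_three]
      rw [e1 x]
      ring
    · simp [Fmat, Lam, Matrix.mulVec, dotProduct, Fin.sum_univ_three]
      rw [(hd1 x).deriv, e1 x, e2 x]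
      ring
    · simp [Fmat, Lam, Matrix.mulVec, dotProduct, Fin.sum_univ_three]
      rw [hd2 x, e1 x, e2 x]
      rcases hs with hs | hs <;> subst hs <;> linear_combination hx
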